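/- arXiv:1203.6344 — 3 statements merged into one kernel-verified Lean document; each statement's English description precedes it below -/
import Mathlib

section
/- For all n ≥ 0 and k ≥ 1, p̄_k(n) ≥ p̄_{k+1}(n), i.e., the number of lower k-run overpartitions of n is at least the number of lower (k+1)-run overpartitions of n. -/
open scoped BigOperators
open Real

/-- An overpartition: a multiset of (non-overlined) positive parts together with a
finite set of overlined part sizes (the last occurrence of a part size may be overlined). -/
structure Overpartition where
  parts : Multiset ℕ
  overlined : Finset ℕ
  parts_pos : ∀ p ∈ parts, 0 < p
  over_pos : ∀ p ∈ overlined, 0 < p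

/-- The size (sum of all parts) of an overpartition. -/
def Overpartition.size (μ : Overpartition) : ℕ := μ.parts.sum + ∑ p ∈ μ.overlined, p

/-- The number of parts of an overpartition. -/
def Overpartition.numParts (μ : Overpartition) : ℕ := Multiset.card μ.parts + μ.overlined.card

/-- Lower `k`-run condition: every overlined part lies in a run of exactly `k` consecutive
overlined parts `j+1, …, j+k`, with no part of size `j` (overlined or not) and no overlined
part of size `j+k+1`. -/
def IsLowerKRun (k : ℕ) (μ : Overpartition) : Prop :=
  ∀ m ∈ μ.overlined, ∃ j : ℕ, j + 1 ≤ m ∧ m ≤ j + k ∧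
    (∀ i : ℕ, j + 1 ≤ i → i ≤ j + k → i ∈ μ.overlined) ∧
    j ∉ μ.parts ∧ j ∉ μ.overlined ∧ j + k + 1 ∉ μ.overlined

/-- Upper `k`-run condition: every overlined part lies in a run of overlined parts
`j+1, …, j+k`, with no overlined part of size `j` and no part of any kind of size `j+k+1`. -/
def IsUpperKRun (k : ℕ) (μ : Overpartition) : Prop :=
  ∀ m ∈ μ.overlined, ∃ j : ℕ, j + 1 ≤ m ∧ m ≤ j + k ∧
    (∀ i : ℕ, j + 1 ≤ i → i ≤ j + k → i ∈ μ.overlined) ∧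
    j ∉ μ.overlined ∧ j + k + 1 ∉ μ.parts ∧ j + k + 1 ∉ μ.overlined

/-- `p̄ₖ(n)`, the number of lower `k`-run overpartitions of `n`. -/
noncomputable def lowerKRunCount (k n : ℕ) : ℕ :=
  Nat.card {μ : Overpartition // μ.size = n ∧ IsLowerKRun k μ}

/-- The number of upper `k`-run overpartitions of `n`. -/
noncomputable def upperKRunCount (k n : ℕ) : ℕ :=
  Nat.card {μ : Overpartition // μ.size = n ∧ IsUpperKRun k μ}

/-- `p̄ₖ(ℓ,n)`, the number of upper `k`-run overpartitions of `n` with exactly `ℓ` parts. -/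
noncomputable def upperKRunCount2 (k l n : ℕ) : ℕ :=
  Nat.card {μ : Overpartition // μ.size = n ∧ μ.numParts = l ∧ IsUpperKRun k μ}

/-- The one-variable generating function `Ḡₖ(q)` of lower `k`-run overpartitions. -/
noncomputable def Gbar (k : ℕ) (q : ℂ) : ℂ := ∑' n : ℕ, (lowerKRunCount k n : ℂ) * q ^ n

/-- The two-variable generating function `Ḡₖ(x;q)` of `k`-run overpartitions. -/
noncomputable def Gbar2 (k : ℕ) (x q : ℂ) : ℂ :=
  ∑' p : ℕ × ℕ, (upperKRunCount2 k p.1 p.2 : ℂ) * x ^ p.1 * q ^ p.2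

/-- The finite q-Pochhammer symbol `(a;q)ₙ`. -/
def qPoch (a q : ℂ) (n : ℕ) : ℂ := ∏ j ∈ Finset.range n, (1 - a * q ^ j)

/-- The infinite q-Pochhammer symbol `(a;q)_∞`. -/
noncomputable def qPochInf (a q : ℂ) : ℂ := ∏' j : ℕ, (1 - a * q ^ j)


namespace LowerKRunAux

/-- The "tops" of runs: overlined parts whose successor is not overlined. -/
def tops (s : Finset ℕ) : Finset ℕ := s.filter (fun m => m + 1 ∉ s)

lemma tops_subset (s : Finset ℕ) : tops s ⊆ s := Finset.filter_subset _ _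

/-- The map removing the overline of the top element of each run. -/
def phi (μ : Overpartition) : Overpartition where
  parts := μ.parts + (tops μ.overlined).val
  overlined := μ.overlined \ tops μ.overlined
  parts_pos := by
    intro p hp
    rcases Multiset.mem_add.1 hp with h | h
    · exact μ.parts_pos p h
    · exact μ.over_pos p (tops_subset _ h)
  over_pos := fun p hp => μ.over_pos p (Finset.mem_sdiff.1 hp).1

lemma mem_phi_over {μ : Overpartition} {m : ℕ} :
    m ∈ (phi μ).overlined ↔ m ∈ μ.overlined ∧ m + 1 ∈ μ.overlined := by
  simp only [phi, tops, Finset.mem_sdiff, Finset.mem_filter, not_and, not_not]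
  constructor
  · rintro ⟨h1, h2⟩; exact ⟨h1, h2 h1⟩
  · rintro ⟨h1, h2⟩; exact ⟨h1, fun _ => h2⟩

lemma mem_phi_parts {μ : Overpartition} {m : ℕ} :
    m ∈ (phi μ).parts ↔ m ∈ μ.parts ∨ m ∈ tops μ.overlined := by
  simp [phi]

lemma phi_size (μ : Overpartition) : (phi μ).size = μ.size := by
  unfold Overpartition.size
  have hsub : tops μ.overlined ⊆ μ.overlined := tops_subset _
  have h1 : ∑ p ∈ μ.overlined \ tops μ.overlined, p + ∑ p ∈ tops μ.overlined, p = ∑ p ∈ μ.overlined, p :=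
    Finset.sum_sdiff hsub
  have h2 : ∑ p ∈ tops μ.overlined, p = (tops μ.overlined).val.sum :=
    congrArg Multiset.sum (Multiset.map_id' (tops μ.overlined).val)
  show (μ.parts + (tops μ.overlined).val).sum + ∑ p ∈ μ.overlined \ tops μ.overlined, p
      = μ.parts.sum + ∑ p ∈ μ.overlined, p
  rw [Multiset.sum_add, ← h2]
  omega

lemma phi_krun {k : ℕ} {μ : Overpartition} (h : IsLowerKRun (k + 1) μ) :
    IsLowerKRun k (phi μ) := by
  intro m hm
  obtain ⟨hm1, hm2⟩ := mem_phi_over.1 hm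
  obtain ⟨j, hj1, hj2, hrun, hjp, hjo, hjtop⟩ := h m hm1
  refine ⟨j, hj1, ?_, ?_, ?_, ?_, ?_⟩
  · -- m ≤ j + k
    by_contra hc
    have hme : m = j + (k + 1) := by omega
    exact hjtop (by rw [← hme]; exact hm2)
  · intro i hi1 hi2
    exact mem_phi_over.2 ⟨hrun i hi1 (by omega), hrun (i + 1) (by omega) (by omega)⟩
  · intro hc
    rcases mem_phi_parts.1 hc with h' | h'
    · exact hjp h'
    · exact hjo (tops_subset _ h')
  · intro hc
    exact hjo (mem_phi_over.1 hc).1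
  · intro hc
    exact hjtop (mem_phi_over.1 hc).2

lemma over_recover {k : ℕ} (hk : 1 ≤ k) {μ : Overpartition} (h : IsLowerKRun (k + 1) μ) :
    μ.overlined = (phi μ).overlined ∪ (tops (phi μ).overlined).image (· + 1) := by
  ext m
  simp only [Finset.mem_union, Finset.mem_image, tops, Finset.mem_filter]
  constructor
  · intro hm
    by_cases hm1 : m + 1 ∈ μ.overlined
    · exact Or.inl (mem_phi_over.2 ⟨hm, hm1⟩)
    · right
      obtain ⟨j, hj1, hj2, hrun, hjp, hjo, hjtop⟩ := h m hm
      have hmeq : m = j + (k + 1) := by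
        by_contra hne
        exact hm1 (hrun (m + 1) (by omega) (by omega))
      refine ⟨j + k, ⟨?_, ?_⟩, by omega⟩
      · exact mem_phi_over.2 ⟨hrun (j + k) (by omega) (by omega), by
          have he : j + k + 1 = m := by omega
          rw [he]; exact hm⟩
      · intro hc
        have hmem := (mem_phi_over.1 hc).2
        have hme : j + k + 1 = m := by omega
        rw [hme] at hmem
        exact hm1 hmem
  · rintro (hm | ⟨t, ⟨ht, _⟩, rfl⟩)
    · exact (mem_phi_over.1 hm).1
    · exact (mem_phi_over.1 ht).2

lemma phi_inj {k : ℕ} (hk : 1 ≤ k) {μ₁ μ₂ : Overpartition}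
    (h₁ : IsLowerKRun (k + 1) μ₁) (h₂ : IsLowerKRun (k + 1) μ₂)
    (heq : phi μ₁ = phi μ₂) : μ₁ = μ₂ := by
  have hover : μ₁.overlined = μ₂.overlined := by
    rw [over_recover hk h₁, over_recover hk h₂, heq]
  have hparts : μ₁.parts = μ₂.parts := by
    have hp := congrArg Overpartition.parts heq
    simp only [phi] at hp
    rw [hover] at hp
    exact add_right_cancel hp
  cases μ₁; cases μ₂
  simp_all

/-- Overpartitions of a fixed size (with any predicate) form a finite type. -/
lemma finite_subtype (n : ℕ) (P : Overpartition → Prop) :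
    Finite {μ : Overpartition // μ.size = n ∧ P μ} := by
  classical
  set M : Multiset ℕ := n • (Finset.range (n + 1)).val with hM
  have key : ∀ μ : Overpartition, μ.size = n →
      μ.parts ≤ M ∧ μ.overlined.val ≤ (Finset.range (n + 1)).val := by
    intro μ hs
    have hsum : μ.parts.sum + ∑ p ∈ μ.overlined, p = n := hs
    have hps : μ.parts.sum ≤ n := by omega
    constructor
    · rw [Multiset.le_iff_count]
      intro x
      by_cases hx : x ∈ μ.parts
      · have hxle : x ≤ μ.parts.sum := Multiset.le_sum_of_mem hx
        have hxpos : 0 < x := μ.parts_pos x hx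
        have hcard : Multiset.card μ.parts ≤ μ.parts.sum := by
          have h1 := Multiset.card_nsmul_le_sum (s := μ.parts) (a := 1)
            (fun y hy => μ.parts_pos y hy)
          simpa using h1
        have hcx : Multiset.count x μ.parts ≤ n :=
          le_trans (Multiset.count_le_card x μ.parts) (le_trans hcard hps)
        have hxm : x ∈ Finset.range (n + 1) := Finset.mem_range.2 (by omega)
        have hc : Multiset.count x M = n * Multiset.count x (Finset.range (n + 1)).val := by
          rw [hM, Multiset.count_nsmul]
        rw [hc, Multiset.count_eq_one_of_mem (Finset.range (n + 1)).nodup hxm]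
        omega
      · rw [Multiset.count_eq_zero_of_notMem hx]
        exact Nat.zero_le _
    · rw [Finset.val_le_iff]
      intro x hx
      have hxle : x ≤ ∑ p ∈ μ.overlined, p :=
        Finset.single_le_sum (f := fun p => p) (fun i _ => Nat.zero_le i) hx
      exact Finset.mem_range.2 (by omega)
  haveI : Fintype {m : Multiset ℕ // m ≤ M} :=
    Fintype.ofFinset M.powerset.toFinset
      (fun x => by rw [Multiset.mem_toFinset]; exact Multiset.mem_powerset)
  haveI : Fintype {m : Multiset ℕ // m ≤ (Finset.range (n + 1)).val} :=
    Fintype.ofFinset (Finset.range (n + 1)).val.powerset.toFinset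
      (fun x => by rw [Multiset.mem_toFinset]; exact Multiset.mem_powerset)
  apply Finite.of_injective (f := fun μ : {μ : Overpartition // μ.size = n ∧ P μ} =>
    ((⟨μ.1.parts, (key μ.1 μ.2.1).1⟩ : {m : Multiset ℕ // m ≤ M}),
     (⟨μ.1.overlined.val, (key μ.1 μ.2.1).2⟩ :
        {m : Multiset ℕ // m ≤ (Finset.range (n + 1)).val})))
  rintro ⟨⟨p1, o1, _, _⟩, _⟩ ⟨⟨p2, o2, _, _⟩, _⟩ h
  simp only [Prod.mk.injEq, Subtype.mk.injEq] at h
  obtain ⟨h1, h2⟩ := h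
  have ho : o1 = o2 := Finset.val_injective h2
  subst h1; subst ho; rfl

end LowerKRunAux

/-- p̄ₖ(n) ≥ p̄_{k+1}(n) for all n ≥ 0 and k ≥ 1. -/
theorem lowerKRunCount_anti (n k : ℕ) (hk : 1 ≤ k) :
    lowerKRunCount (k + 1) n ≤ lowerKRunCount k n := by
  classical
  haveI := LowerKRunAux.finite_subtype n (IsLowerKRun k)
  exact Nat.card_le_card_of_injective
    (fun μ : {μ : Overpartition // μ.size = n ∧ IsLowerKRun (k + 1) μ} =>
      (⟨LowerKRunAux.phi μ.1,
        by rw [LowerKRunAux.phi_size]; exact μ.2.1,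
        LowerKRunAux.phi_krun μ.2.2⟩ : {μ : Overpartition // μ.size = n ∧ IsLowerKRun k μ}))
    (by
      rintro ⟨μ₁, _, h₁⟩ ⟨μ₂, _, h₂⟩ h
      simp only [Subtype.mk.injEq] at h ⊢
      exact LowerKRunAux.phi_inj hk h₁ h₂ h)
end

section
/- Define A_{r,s}(q) := (−1)^s q^{k(k+1)(r+s)²/2 + (k+1)s(s+1)/2} / ((q^k;q^k)_r (q^{k+1};q^{k+1})_s) and λ̃_m := Σ_{kr+(k+1)s = m, r,s ≥ 0} A_{r,s}. Then (1−q^m) λ̃_m = q^{m(k+1) − k(k+1)/2} (λ̃_{m−k} − λ̃_{m−k−1}) for all m ≥ 1. -/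
open scoped BigOperators
open Real

/-- The summand A_{r,s}(q). -/
noncomputable def Atil (k : ℕ) (q : ℂ) (r s : ℕ) : ℂ :=
  (-1) ^ s * q ^ (k * (k + 1) * (r + s) ^ 2 / 2 + (k + 1) * s * (s + 1) / 2) /
    (qPoch (q ^ k) (q ^ k) r * qPoch (q ^ (k + 1)) (q ^ (k + 1)) s)

/-- λ̃ₘ = Σ_{kr+(k+1)s=m} A_{r,s}, with λ̃ⱼ = 0 for j < 0. -/
noncomputable def lamTil (k : ℕ) (q : ℂ) (m : ℤ) : ℂ :=
  if m < 0 then 0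
  else
    ∑ p ∈ (Finset.range (m.toNat + 1) ×ˢ Finset.range (m.toNat + 1)).filter
        (fun p => k * p.1 + (k + 1) * p.2 = m.toNat), Atil k q p.1 p.2

namespace LamAux

def S (k n : ℕ) : Finset (ℕ × ℕ) :=
  (Finset.range (n + 1) ×ˢ Finset.range (n + 1)).filter
    (fun p => k * p.1 + (k + 1) * p.2 = n)

def E (k r s : ℕ) : ℕ := k * (k + 1) * (r + s) ^ 2 / 2 + (k + 1) * s * (s + 1) / 2

lemma two_mul_E (k r s : ℕ) :
    2 * E k r s = k * (k + 1) * (r + s) ^ 2 + (k + 1) * s * (s + 1) := by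
  have h1 : 2 ∣ k * (k + 1) * (r + s) ^ 2 :=
    Dvd.dvd.mul_right (Nat.even_mul_succ_self k).two_dvd _
  have h2 : 2 ∣ (k + 1) * s * (s + 1) := by
    have h : 2 ∣ s * (s + 1) := (Nat.even_mul_succ_self s).two_dvd
    have e : (k + 1) * s * (s + 1) = (k + 1) * (s * (s + 1)) := by ring
    rw [e]; exact h.mul_left _
  obtain ⟨x, hx⟩ := h1
  obtain ⟨y, hy⟩ := h2
  rw [E, hx, hy]; omega

lemma Atil_eq (k : ℕ) (q : ℂ) (r s : ℕ) :
    Atil k q r s = (-1) ^ s * q ^ E k r s /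
      (qPoch (q ^ k) (q ^ k) r * qPoch (q ^ (k + 1)) (q ^ (k + 1)) s) := rfl

lemma qPoch_succ (a q : ℂ) (n : ℕ) :
    qPoch a q (n + 1) = qPoch a q n * (1 - a * q ^ n) := Finset.prod_range_succ _ _

lemma pow_ne_one {q : ℂ} (hq : ‖q‖ < 1) {a : ℕ} (ha : a ≠ 0) : q ^ a ≠ 1 := by
  intro h
  have h2 : ‖q ^ a‖ < 1 := by
    rw [norm_pow]; exact pow_lt_one₀ (norm_nonneg q) hq ha
  rw [h] at h2; simp at h2

lemma one_sub_pow_ne {q : ℂ} (hq : ‖q‖ < 1) {a : ℕ} (ha : a ≠ 0) : (1 : ℂ) - q ^ a ≠ 0 := by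
  intro h
  exact pow_ne_one hq ha (by linear_combination -h)

lemma qPoch_ne_zero {q : ℂ} (hq : ‖q‖ < 1) {t : ℕ} (ht : 1 ≤ t) (n : ℕ) :
    qPoch (q ^ t) (q ^ t) n ≠ 0 := by
  rw [qPoch, Finset.prod_ne_zero_iff]
  intro j _
  have h : q ^ t * (q ^ t) ^ j = q ^ (t * (j + 1)) := by
    rw [← pow_mul, ← pow_add]; congr 1; ring
  rw [h]
  exact one_sub_pow_ne hq (by positivity)

lemma he2 (k : ℕ) (m : ℤ) :
    2 * (m * ((k : ℤ) + 1) - (k : ℤ) * ((k : ℤ) + 1) / 2)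
      = 2 * m * ((k : ℤ) + 1) - (k : ℤ) * ((k : ℤ) + 1) := by
  have d : (2 : ℤ) ∣ (k : ℤ) * ((k : ℤ) + 1) := by
    exact_mod_cast (Nat.even_mul_succ_self k).two_dvd
  have := Int.mul_ediv_cancel' d
  linarith

lemma castE (k r s : ℕ) : (2 : ℤ) * (E k r s : ℤ)
    = (k : ℤ) * ((k : ℤ) + 1) * ((r : ℤ) + s) ^ 2 + ((k : ℤ) + 1) * s * (s + 1) := by
  have := two_mul_E k r s
  exact_mod_cast (by push_cast [← this]; ring : _)

lemma keyR {k m r s : ℕ} (hm : m = k * (r + 1) + (k + 1) * s) :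
    (((k + 1) * s : ℕ) : ℤ) + (E k (r + 1) s : ℤ)
      = ((m : ℤ) * ((k : ℤ) + 1) - (k : ℤ) * ((k : ℤ) + 1) / 2) + (E k r s : ℤ) := by
  apply mul_left_cancel₀ (two_ne_zero (α := ℤ))
  have h1 := castE k (r + 1) s
  have h2 := castE k r s
  have he := he2 k m
  have hm' : (m : ℤ) = (k : ℤ) * ((r : ℤ) + 1) + ((k : ℤ) + 1) * s := by
    exact_mod_cast (by push_cast [hm]; ring : _)
  push_cast at h1 ⊢
  linear_combination h1 - h2 - he - 2 * ((k : ℤ) + 1) * hm'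

lemma keyS {k m r s : ℕ} (hm : m = k * r + (k + 1) * (s + 1)) :
    (E k r (s + 1) : ℤ)
      = ((m : ℤ) * ((k : ℤ) + 1) - (k : ℤ) * ((k : ℤ) + 1) / 2) + (E k r s : ℤ) := by
  apply mul_left_cancel₀ (two_ne_zero (α := ℤ))
  have h1 := castE k r (s + 1)
  have h2 := castE k r s
  have he := he2 k m
  have hm' : (m : ℤ) = (k : ℤ) * r + ((k : ℤ) + 1) * ((s : ℤ) + 1) := by
    exact_mod_cast (by push_cast [hm]; ring : _)
  push_cast at h1 ⊢
  linear_combination h1 - h2 - he - 2 * ((k : ℤ) + 1) * hm'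

lemma stepR {k : ℕ} {q : ℂ} (hq : ‖q‖ < 1) (hq0 : q ≠ 0) (hk : 1 ≤ k) {m r s : ℕ}
    (hm : m = k * (r + 1) + (k + 1) * s) :
    q ^ ((k + 1) * s) * (1 - q ^ (k * (r + 1))) * Atil k q (r + 1) s
      = q ^ ((m : ℤ) * ((k : ℤ) + 1) - (k : ℤ) * ((k : ℤ) + 1) / 2) * Atil k q r s := by
  have hP : qPoch (q ^ k) (q ^ k) r ≠ 0 := qPoch_ne_zero hq hk r
  have hQ : qPoch (q ^ (k + 1)) (q ^ (k + 1)) s ≠ 0 := qPoch_ne_zero hq (by omega) s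
  have hD : (1 : ℂ) - q ^ (k * (r + 1)) ≠ 0 := one_sub_pow_ne hq (by positivity)
  have hsucc : qPoch (q ^ k) (q ^ k) (r + 1)
      = qPoch (q ^ k) (q ^ k) r * (1 - q ^ (k * (r + 1))) := by
    rw [qPoch_succ, ← pow_mul, ← pow_add]
    congr 3
    ring
  have hqe : q ^ ((m : ℤ) * ((k : ℤ) + 1) - (k : ℤ) * ((k : ℤ) + 1) / 2) * q ^ (E k r s)
      = q ^ ((k + 1) * s) * q ^ (E k (r + 1) s) := by
    rw [← zpow_natCast q (E k r s), ← zpow_add₀ hq0, ← keyR hm, zpow_add₀ hq0,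
      zpow_natCast, zpow_natCast]
  rw [Atil_eq, Atil_eq, hsucc]
  set P := qPoch (q ^ k) (q ^ k) r
  set Q := qPoch (q ^ (k + 1)) (q ^ (k + 1)) s
  set D := (1 : ℂ) - q ^ (k * (r + 1))
  simp only [div_eq_mul_inv, mul_inv]
  linear_combination (-((-1 : ℂ) ^ s / (P * Q))) * hqe
    + (-1 : ℂ) ^ s / (P * Q) * q ^ ((k + 1) * s) * q ^ (E k (r + 1) s) * (mul_inv_cancel₀ hD)

lemma stepS {k : ℕ} {q : ℂ} (hq : ‖q‖ < 1) (hq0 : q ≠ 0) (hk : 1 ≤ k) {m r s : ℕ}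
    (hm : m = k * r + (k + 1) * (s + 1)) :
    (1 - q ^ ((k + 1) * (s + 1))) * Atil k q r (s + 1)
      = -(q ^ ((m : ℤ) * ((k : ℤ) + 1) - (k : ℤ) * ((k : ℤ) + 1) / 2) * Atil k q r s) := by
  have hP : qPoch (q ^ k) (q ^ k) r ≠ 0 := qPoch_ne_zero hq hk r
  have hQ : qPoch (q ^ (k + 1)) (q ^ (k + 1)) s ≠ 0 := qPoch_ne_zero hq (by omega) s
  have hD : (1 : ℂ) - q ^ ((k + 1) * (s + 1)) ≠ 0 := one_sub_pow_ne hq (by positivity)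
  have hsucc : qPoch (q ^ (k + 1)) (q ^ (k + 1)) (s + 1)
      = qPoch (q ^ (k + 1)) (q ^ (k + 1)) s * (1 - q ^ ((k + 1) * (s + 1))) := by
    rw [qPoch_succ, ← pow_mul, ← pow_add]
    congr 3
    ring
  have hqe : q ^ ((m : ℤ) * ((k : ℤ) + 1) - (k : ℤ) * ((k : ℤ) + 1) / 2) * q ^ (E k r s)
      = q ^ (E k r (s + 1)) := by
    rw [← zpow_natCast q (E k r s), ← zpow_add₀ hq0, ← keyS hm, zpow_natCast]
  rw [Atil_eq, Atil_eq, hsucc]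
  set P := qPoch (q ^ k) (q ^ k) r
  set Q := qPoch (q ^ (k + 1)) (q ^ (k + 1)) s
  set D := (1 : ℂ) - q ^ ((k + 1) * (s + 1))
  simp only [div_eq_mul_inv, mul_inv]
  linear_combination (-1 : ℂ) ^ s / (P * Q) * hqe
    - (-1 : ℂ) ^ s / (P * Q) * q ^ (E k r (s + 1)) * (mul_inv_cancel₀ hD)

end LamAux
namespace LamAux

lemma perTerm {k : ℕ} {q : ℂ} (hq : ‖q‖ < 1) (hq0 : q ≠ 0) (hk : 1 ≤ k)
    {m : ℕ} (hm1 : 1 ≤ m) (r s : ℕ) (hrs : k * r + (k + 1) * s = m) :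
    (1 - q ^ m) * Atil k q r s
      = q ^ ((m : ℤ) * ((k : ℤ) + 1) - (k : ℤ) * ((k : ℤ) + 1) / 2) *
        ((if r = 0 then 0 else Atil k q (r - 1) s)
          - (if s = 0 then 0 else Atil k q r (s - 1))) := by
  match r, s with
  | 0, 0 => simp at hrs; omega
  | 0, s + 1 =>
    have hm : m = k * 0 + (k + 1) * (s + 1) := hrs.symm
    have hmm : m = (k + 1) * (s + 1) := by rw [hm]; ring
    rw [if_pos rfl, if_neg (by omega), Nat.add_sub_cancel, zero_sub, mul_neg]
    rw [show q ^ m = q ^ ((k + 1) * (s + 1)) by rw [hmm]]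
    exact stepS hq hq0 hk hm
  | r + 1, 0 =>
    have hm : m = k * (r + 1) + (k + 1) * 0 := hrs.symm
    have hmm : m = k * (r + 1) := by rw [hm]; ring
    rw [if_neg (by omega), if_pos rfl, Nat.add_sub_cancel, sub_zero]
    rw [show q ^ m = q ^ (k * (r + 1)) by rw [hmm]]
    have := stepR hq hq0 hk hm
    rw [Nat.mul_zero, pow_zero, one_mul] at this
    exact this
  | r + 1, s + 1 =>
    have hm : m = k * (r + 1) + (k + 1) * (s + 1) := hrs.symm
    have split : (1 : ℂ) - q ^ m
        = (1 - q ^ ((k + 1) * (s + 1))) + q ^ ((k + 1) * (s + 1)) * (1 - q ^ (k * (r + 1))) := by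
      rw [hm, pow_add]; ring
    rw [split, add_mul, stepS hq hq0 hk hm, stepR hq hq0 hk hm]
    rw [if_neg (by omega), if_neg (by omega), Nat.add_sub_cancel, Nat.add_sub_cancel]
    ring

lemma mem_S {k : ℕ} (hk : 1 ≤ k) {n : ℕ} {p : ℕ × ℕ} :
    p ∈ S k n ↔ k * p.1 + (k + 1) * p.2 = n := by
  unfold S
  simp only [Finset.mem_filter, Finset.mem_product, Finset.mem_range]
  constructor
  · exact fun h => h.2
  · intro h
    have h1 : p.1 ≤ k * p.1 := Nat.le_mul_of_pos_left _ hk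
    have h2 : p.2 ≤ (k + 1) * p.2 := Nat.le_mul_of_pos_left _ (by omega)
    set x := k * p.1
    set y := (k + 1) * p.2
    exact ⟨⟨by omega, by omega⟩, h⟩

lemma lamTil_natCast (k : ℕ) (q : ℂ) (n : ℕ) :
    lamTil k q (n : ℤ) = ∑ p ∈ S k n, Atil k q p.1 p.2 := by
  rw [lamTil, if_neg (by omega)]
  simp [S]

lemma lamTil_neg (k : ℕ) (q : ℂ) {z : ℤ} (hz : z < 0) : lamTil k q z = 0 := if_pos hz

lemma sumShiftR {k : ℕ} (q : ℂ) (hk : 1 ≤ k) (m : ℕ) :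
    (∑ p ∈ S k m, if p.1 = 0 then 0 else Atil k q (p.1 - 1) p.2)
      = lamTil k q ((m : ℤ) - k) := by
  have hfilter : (∑ p ∈ S k m, if p.1 = 0 then 0 else Atil k q (p.1 - 1) p.2)
      = ∑ p ∈ (S k m).filter (fun p => ¬ p.1 = 0), Atil k q (p.1 - 1) p.2 := by
    rw [Finset.sum_filter]
    exact Finset.sum_congr rfl (fun p _ => (ite_not _ _ _).symm)
  by_cases hkm : k ≤ m
  · rw [show (m : ℤ) - k = ((m - k : ℕ) : ℤ) by omega, lamTil_natCast, hfilter]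
    refine Finset.sum_nbij' (fun p => (p.1 - 1, p.2)) (fun p => (p.1 + 1, p.2))
      ?_ ?_ ?_ ?_ ?_
    · rintro ⟨a, b⟩ ha
      simp only [Finset.mem_filter, mem_S hk] at ha ⊢
      obtain ⟨h, h0⟩ := ha
      obtain ⟨c, rfl⟩ := Nat.exists_eq_succ_of_ne_zero h0
      rw [Nat.mul_succ] at h
      show k * c + (k + 1) * b = m - k
      set x := k * c
      set y := (k + 1) * b
      omega
    · rintro ⟨a, b⟩ ha
      simp only [Finset.mem_filter, mem_S hk] at ha ⊢
      rw [Nat.mul_succ]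
      set x := k * a
      set y := (k + 1) * b
      omega
    · rintro ⟨a, b⟩ ha
      simp only [Finset.mem_filter] at ha
      have h0 : a ≠ 0 := ha.2
      show (a - 1 + 1, b) = (a, b)
      simp only [Prod.mk.injEq]
      exact ⟨by omega, trivial⟩
    · rintro ⟨a, b⟩ _
      show (a + 1 - 1, b) = (a, b)
      simp
    · rintro ⟨a, b⟩ _
      rfl
  · rw [lamTil_neg k q (by omega), hfilter]
    apply Finset.sum_eq_zero
    rintro ⟨a, b⟩ hp
    simp only [Finset.mem_filter, mem_S hk] at hp
    obtain ⟨h, h0⟩ := hp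
    obtain ⟨c, rfl⟩ := Nat.exists_eq_succ_of_ne_zero h0
    rw [Nat.mul_succ] at h
    set x := k * c
    set y := (k + 1) * b
    omega

lemma sumShiftS {k : ℕ} (q : ℂ) (hk : 1 ≤ k) (m : ℕ) :
    (∑ p ∈ S k m, if p.2 = 0 then 0 else Atil k q p.1 (p.2 - 1))
      = lamTil k q ((m : ℤ) - k - 1) := by
  have hfilter : (∑ p ∈ S k m, if p.2 = 0 then 0 else Atil k q p.1 (p.2 - 1))
      = ∑ p ∈ (S k m).filter (fun p => ¬ p.2 = 0), Atil k q p.1 (p.2 - 1) := by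
    rw [Finset.sum_filter]
    exact Finset.sum_congr rfl (fun p _ => (ite_not _ _ _).symm)
  by_cases hkm : k + 1 ≤ m
  · rw [show (m : ℤ) - k - 1 = ((m - (k + 1) : ℕ) : ℤ) by omega, lamTil_natCast, hfilter]
    refine Finset.sum_nbij' (fun p => (p.1, p.2 - 1)) (fun p => (p.1, p.2 + 1))
      ?_ ?_ ?_ ?_ ?_
    · rintro ⟨a, b⟩ ha
      simp only [Finset.mem_filter, mem_S hk] at ha ⊢
      obtain ⟨h, h0⟩ := ha
      obtain ⟨c, rfl⟩ := Nat.exists_eq_succ_of_ne_zero h0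
      rw [Nat.mul_succ] at h
      show k * a + (k + 1) * c = m - (k + 1)
      set x := k * a
      set y := (k + 1) * c
      omega
    · rintro ⟨a, b⟩ ha
      simp only [Finset.mem_filter, mem_S hk] at ha ⊢
      rw [Nat.mul_succ]
      set x := k * a
      set y := (k + 1) * b
      omega
    · rintro ⟨a, b⟩ ha
      simp only [Finset.mem_filter] at ha
      have h0 : b ≠ 0 := ha.2
      show (a, b - 1 + 1) = (a, b)
      simp only [Prod.mk.injEq]
      exact ⟨trivial, by omega⟩
    · rintro ⟨a, b⟩ _
      show (a, b + 1 - 1) = (a, b)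
      simp
    · rintro ⟨a, b⟩ _
      rfl
  · rw [lamTil_neg k q (by omega), hfilter]
    apply Finset.sum_eq_zero
    rintro ⟨a, b⟩ hp
    simp only [Finset.mem_filter, mem_S hk] at hp
    obtain ⟨h, h0⟩ := hp
    obtain ⟨c, rfl⟩ := Nat.exists_eq_succ_of_ne_zero h0
    rw [Nat.mul_succ] at h
    set x := k * a
    set y := (k + 1) * c
    omega

end LamAux

/-- (1−qᵐ) λ̃ₘ = q^{m(k+1) − k(k+1)/2} (λ̃_{m−k} − λ̃_{m−k−1}) for all m ≥ 1. -/
theorem lamTil_recurrence (k : ℕ) (hk : 1 ≤ k) (q : ℂ) (hq : ‖q‖ < 1) (m : ℕ) (hm : 1 ≤ m) :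
    (1 - q ^ m) * lamTil k q m =
      q ^ ((m : ℤ) * (k + 1) - k * (k + 1) / 2) *
        (lamTil k q ((m : ℤ) - k) - lamTil k q ((m : ℤ) - k - 1)) := by
  by_cases hq0 : q = 0
  · subst hq0
    have hL : lamTil k 0 (m : ℤ) = 0 := by
      rw [LamAux.lamTil_natCast]
      apply Finset.sum_eq_zero
      rintro ⟨r, s⟩ hp
      rw [LamAux.mem_S hk] at hp
      have hE : LamAux.E k r s ≠ 0 := by
        have hrs : 1 ≤ r + s := by
          by_contra hcon
          push_neg at hcon
          have hr : r = 0 := by omega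
          have hs : s = 0 := by omega
          subst hr; subst hs
          simp at hp
          omega
        have h2 : 2 ≤ k * (k + 1) * (r + s) ^ 2 := by
          have ha : 1 * 2 ≤ k * (k + 1) := Nat.mul_le_mul hk (by omega)
          have hb : 1 ≤ (r + s) ^ 2 := Nat.one_le_pow _ _ (by omega)
          calc 2 = 1 * 2 * 1 := by ring
            _ ≤ k * (k + 1) * (r + s) ^ 2 := Nat.mul_le_mul ha hb
        have h3 := LamAux.two_mul_E k r s
        set x := k * (k + 1) * (r + s) ^ 2
        set y := (k + 1) * s * (s + 1)
        omega
      rw [LamAux.Atil_eq, zero_pow hE, mul_zero, zero_div]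
    rw [hL, mul_zero]
    by_cases he : (m : ℤ) * ((k : ℤ) + 1) - (k : ℤ) * ((k : ℤ) + 1) / 2 = 0
    · have h2 := LamAux.he2 k (m : ℤ)
      rw [he, mul_zero] at h2
      have hk2 : (k : ℤ) = 2 * m := by
        have hz : (2 * (m : ℤ) - k) * ((k : ℤ) + 1) = 0 := by ring_nf; linarith
        rcases mul_eq_zero.1 hz with h | h
        · linarith
        · have : (0 : ℤ) ≤ (k : ℤ) := Int.natCast_nonneg k
          linarith
      have hmk : m < k := by
        have : k = 2 * m := by exact_mod_cast hk2
        omega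
      rw [LamAux.lamTil_neg k 0 (by omega), LamAux.lamTil_neg k 0 (by omega)]
      simp
    · rw [zero_zpow _ he, zero_mul]
  · rw [LamAux.lamTil_natCast, Finset.mul_sum]
    rw [Finset.sum_congr rfl
      (fun p hp => LamAux.perTerm hq hq0 hk hm p.1 p.2 ((LamAux.mem_S hk).1 hp))]
    rw [← Finset.mul_sum, Finset.sum_sub_distrib,
      LamAux.sumShiftR q hk m, LamAux.sumShiftS q hk m]
end

section
/- Lower 1-run overpartitions of n are in bijection (via Ferrers diagram conjugation) with overpartitions of n in which every overlined part size m that is not the largest part also occurs non-overlined; in particular the two classes are equinumerous for every n. -/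
open scoped BigOperators
open Real

/-- Overpartitions in which every overlined part size that is not the largest part
also occurs non-overlined. -/
def ConjClass (μ : Overpartition) : Prop :=
  ∀ m ∈ μ.overlined, m ∈ μ.parts ∨ ((∀ p ∈ μ.parts, p ≤ m) ∧ ∀ p ∈ μ.overlined, p ≤ m)

namespace L1RC

/-- number of parts of `l` that are `≥ j` -/
def Nf (l : Multiset ℕ) (j : ℕ) : ℕ := Multiset.card (l.filter (fun a => j ≤ a))

/-- conjugate multiset -/
def mconj (l : Multiset ℕ) : Multiset ℕ :=
  (((Finset.Icc 1 l.sum).val).map (Nf l)).filter (fun x => 0 < x)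

lemma Nf_cons (a : ℕ) (l : Multiset ℕ) (j : ℕ) :
    Nf (a ::ₘ l) j = Nf l j + if j ≤ a then 1 else 0 := by
  simp only [Nf, Multiset.filter_cons]
  split_ifs <;> simp [add_comm]

lemma Nf_anti (l : Multiset ℕ) {j j' : ℕ} (h : j ≤ j') : Nf l j' ≤ Nf l j := by
  induction l using Multiset.induction with
  | empty => simp [Nf]
  | cons a s ih => simp only [Nf_cons]; split_ifs <;> omega

lemma Nf_pos_iff (l : Multiset ℕ) (j : ℕ) : 0 < Nf l j ↔ ∃ a ∈ l, j ≤ a := by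
  simp [Nf, Multiset.card_pos_iff_exists_mem, Multiset.mem_filter]

lemma Nf_succ (l : Multiset ℕ) (j : ℕ) : Nf l j = Nf l (j + 1) + l.count j := by
  induction l using Multiset.induction with
  | empty => simp [Nf]
  | cons a s ih => simp only [Nf_cons, Multiset.count_cons]; split_ifs <;> omega

lemma mem_le_sum {l : Multiset ℕ} {a : ℕ} (h : a ∈ l) : a ≤ l.sum :=
  Multiset.single_le_sum (fun _ _ => Nat.zero_le _) _ h

lemma count_mconj (l : Multiset ℕ) {m : ℕ} (hm : 0 < m) :
    (mconj l).count m = ((Finset.Icc 1 l.sum).filter (fun j => m = Nf l j)).card := by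
  rw [mconj, Multiset.count_filter, if_pos hm, Multiset.count_map]
  rw [Finset.card_def, Finset.filter_val]

lemma mem_mconj {l : Multiset ℕ} {j : ℕ} (hj : j ∈ Finset.Icc 1 l.sum) (h : 0 < Nf l j) :
    Nf l j ∈ mconj l := by
  rw [mconj, Multiset.mem_filter]
  exact ⟨Multiset.mem_map_of_mem _ (by simpa using hj), h⟩

lemma mconj_pos {l : Multiset ℕ} {x : ℕ} (h : x ∈ mconj l) : 0 < x :=
  (Multiset.mem_filter.mp h).2

end L1RC

namespace L1RC

lemma sum_Nf {l : Multiset ℕ} {K : ℕ} (hK : ∀ a ∈ l, a ≤ K) :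
    ∑ j ∈ Finset.Icc 1 K, Nf l j = l.sum := by
  induction l using Multiset.induction with
  | empty => simp [Nf]
  | cons a s ih =>
    have ha : a ≤ K := hK a (Multiset.mem_cons_self a s)
    have hs : ∀ x ∈ s, x ≤ K := fun x hx => hK x (Multiset.mem_cons_of_mem hx)
    simp only [Nf_cons, Finset.sum_add_distrib, ih hs, Multiset.sum_cons]
    have h2 : ∑ j ∈ Finset.Icc 1 K, (if j ≤ a then 1 else 0) = a := by
      rw [← Finset.card_filter]
      have : Finset.filter (fun j => j ≤ a) (Finset.Icc 1 K) = Finset.Icc 1 a := by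
        ext j; simp only [Finset.mem_filter, Finset.mem_Icc]; omega
      rw [this, Nat.card_Icc]
      omega
    omega

lemma sum_mconj (l : Multiset ℕ) : (mconj l).sum = l.sum := by
  have h0 : (Multiset.filter (fun x => ¬ 0 < x)
      (((Finset.Icc 1 l.sum).val).map (Nf l))).sum = 0 :=
    Multiset.sum_eq_zero (fun x hx => by
      have := (Multiset.mem_filter.mp hx).2; omega)
  have h1 := Multiset.sum_filter_add_sum_filter_not (s := ((Finset.Icc 1 l.sum).val).map (Nf l))
    (fun x => 0 < x)
  rw [mconj]
  rw [← Finset.sum_eq_multiset_sum] at h1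
  rw [sum_Nf (fun a ha => mem_le_sum ha)] at h1
  omega

lemma Nf_mconj (l : Multiset ℕ) {i : ℕ} (hi : 1 ≤ i) :
    Nf (mconj l) i = ((Finset.Icc 1 l.sum).filter (fun t => i ≤ Nf l t)).card := by
  rw [Nf, mconj, Multiset.filter_filter, Finset.card_def, Finset.filter_val]
  have hcg : Multiset.filter (fun a => i ≤ a ∧ 0 < a)
      (((Finset.Icc 1 l.sum).val).map (Nf l)) =
      Multiset.filter (fun a : ℕ => i ≤ a) (((Finset.Icc 1 l.sum).val).map (Nf l)) :=
    Multiset.filter_congr (fun a _ => ⟨And.left, fun h => ⟨h, lt_of_lt_of_le hi h⟩⟩)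
  rw [hcg, ← Multiset.countP_eq_card_filter, Multiset.countP_map]

lemma galois (l : Multiset ℕ) {i j : ℕ} (hi : 1 ≤ i) (hj : 1 ≤ j) :
    j ≤ Nf (mconj l) i ↔ i ≤ Nf l j := by
  rw [Nf_mconj l hi]
  constructor
  · intro h
    by_contra hc
    push_neg at hc
    have hsub : (Finset.Icc 1 l.sum).filter (fun t => i ≤ Nf l t) ⊆ Finset.Icc 1 (j - 1) := by
      intro t ht
      rw [Finset.mem_filter, Finset.mem_Icc] at ht
      rw [Finset.mem_Icc]
      refine ⟨ht.1.1, ?_⟩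
      by_contra h2
      have : Nf l t ≤ Nf l j := Nf_anti l (by omega)
      omega
    have := Finset.card_le_card hsub
    rw [Nat.card_Icc] at this
    omega
  · intro h
    have hjK : j ≤ l.sum := by
      have : 0 < Nf l j := by omega
      obtain ⟨a, ha, hja⟩ := (Nf_pos_iff l j).mp this
      exact le_trans hja (mem_le_sum ha)
    have hsub : Finset.Icc 1 j ⊆ (Finset.Icc 1 l.sum).filter (fun t => i ≤ Nf l t) := by
      intro t ht
      rw [Finset.mem_Icc] at ht
      rw [Finset.mem_filter, Finset.mem_Icc]
      exact ⟨⟨ht.1, le_trans ht.2 hjK⟩, le_trans h (Nf_anti l ht.2)⟩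
    have := Finset.card_le_card hsub
    rw [Nat.card_Icc] at this
    omega

end L1RC

namespace L1RC

lemma nat_eq_of_le_iff {a b : ℕ} (h : ∀ i, 1 ≤ i → (i ≤ a ↔ i ≤ b)) : a = b := by
  rcases Nat.eq_zero_or_pos a with ha | ha
  · rcases Nat.eq_zero_or_pos b with hb | hb
    · omega
    · have := (h b hb).mpr le_rfl; omega
  · rcases Nat.eq_zero_or_pos b with hb | hb
    · have := (h a ha).mp le_rfl; omega
    · have h1 := (h a ha).mp le_rfl
      have h2 := (h b hb).mpr le_rfl
      omega

lemma Nf_mconj_mconj (l : Multiset ℕ) {j : ℕ} (hj : 1 ≤ j) :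
    Nf (mconj (mconj l)) j = Nf l j := by
  refine nat_eq_of_le_iff (fun i hi => ?_)
  rw [galois (mconj l) hj hi, galois l hi hj]

lemma count_eq_Nf_sub (l : Multiset ℕ) (m : ℕ) : l.count m = Nf l m - Nf l (m + 1) := by
  have := Nf_succ l m
  omega

lemma mconj_mconj {l : Multiset ℕ} (hl : ∀ a ∈ l, 0 < a) : mconj (mconj l) = l := by
  ext m
  rcases Nat.eq_zero_or_pos m with hm | hm
  · subst hm
    have h1 : (0 : ℕ) ∉ mconj (mconj l) := fun h => by simpa using mconj_pos h
    have h2 : (0 : ℕ) ∉ l := fun h => by simpa using hl 0 h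
    rw [Multiset.count_eq_zero_of_notMem h1, Multiset.count_eq_zero_of_notMem h2]
  · rw [count_eq_Nf_sub, count_eq_Nf_sub, Nf_mconj_mconj l hm, Nf_mconj_mconj l (by omega)]

lemma Nf_lt_of_mem {l : Multiset ℕ} {m : ℕ} (h : m ∈ l) : Nf l (m + 1) < Nf l m := by
  have h1 := Nf_succ l m
  have h2 : 0 < l.count m := Multiset.count_pos.mpr h
  omega

lemma Nf_pos_of_mem {l : Multiset ℕ} {m : ℕ} (h : m ∈ l) : 0 < Nf l m :=
  (Nf_pos_iff l m).mpr ⟨m, h, le_rfl⟩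

lemma Nf_mconj_Nf {l : Multiset ℕ} {m : ℕ} (hm1 : 1 ≤ m) (hm : m ∈ l) :
    Nf (mconj l) (Nf l m) = m := by
  have hNm : 1 ≤ Nf l m := Nf_pos_of_mem hm
  have h1 : m ≤ Nf (mconj l) (Nf l m) := (galois l hNm hm1).mpr le_rfl
  by_contra hne
  have h2 : m + 1 ≤ Nf (mconj l) (Nf l m) := by omega
  have h3 := (galois l hNm (by omega)).mp h2
  have h4 := Nf_lt_of_mem hm
  omega

end L1RC

namespace L1RC

def lam (μ : Overpartition) : Multiset ℕ := μ.parts + μ.overlined.val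

lemma lam_pos (μ : Overpartition) : ∀ a ∈ lam μ, 0 < a := by
  intro a ha
  rw [lam, Multiset.mem_add] at ha
  rcases ha with h | h
  · exact μ.parts_pos a h
  · exact μ.over_pos a h

lemma mem_lam_of_over {μ : Overpartition} {m : ℕ} (h : m ∈ μ.overlined) : m ∈ lam μ := by
  rw [lam, Multiset.mem_add]; exact Or.inr h

lemma over_Icc {μ : Overpartition} {m : ℕ} (h : m ∈ μ.overlined) : m ∈ Finset.Icc 1 (lam μ).sum :=
  Finset.mem_Icc.mpr ⟨μ.over_pos m h, mem_le_sum (mem_lam_of_over h)⟩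

def oT (μ : Overpartition) : Finset ℕ := μ.overlined.image (Nf (lam μ))

lemma mem_mconj_of_over {μ : Overpartition} {m : ℕ} (h : m ∈ μ.overlined) :
    Nf (lam μ) m ∈ mconj (lam μ) :=
  mem_mconj (over_Icc h) (Nf_pos_of_mem (mem_lam_of_over h))

lemma oT_val_le (μ : Overpartition) : (oT μ).val ≤ mconj (lam μ) := by
  rw [Multiset.le_iff_subset (oT μ).nodup]
  intro t ht
  rw [Finset.mem_val] at ht
  obtain ⟨m, hm, rfl⟩ := Finset.mem_image.mp ht
  exact mem_mconj_of_over hm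

def oconj (μ : Overpartition) : Overpartition where
  parts := mconj (lam μ) - (oT μ).val
  overlined := oT μ
  parts_pos := fun p hp => mconj_pos (Multiset.mem_of_le tsub_le_self hp)
  over_pos := fun p hp => by
    obtain ⟨m, hm, rfl⟩ := Finset.mem_image.mp hp
    exact Nf_pos_of_mem (mem_lam_of_over hm)

lemma lam_oconj (μ : Overpartition) : lam (oconj μ) = mconj (lam μ) := by
  show mconj (lam μ) - (oT μ).val + (oT μ).val = _
  exact tsub_add_cancel_of_le (oT_val_le μ)

lemma size_eq_lam_sum (μ : Overpartition) : μ.size = (lam μ).sum := by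
  rw [Overpartition.size, lam, Multiset.sum_add]
  congr 1
  rw [Finset.sum_eq_multiset_sum, Multiset.map_id']

lemma size_oconj (μ : Overpartition) : (oconj μ).size = μ.size := by
  rw [size_eq_lam_sum, size_eq_lam_sum, lam_oconj, sum_mconj]

lemma oT_oconj (μ : Overpartition) : oT (oconj μ) = μ.overlined := by
  show ((μ.overlined.image (Nf (lam μ))).image (Nf (lam (oconj μ)))) = μ.overlined
  rw [lam_oconj, Finset.image_image]
  have : Finset.image (Nf (mconj (lam μ)) ∘ Nf (lam μ)) μ.overlined = Finset.image id μ.overlined :=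
    Finset.image_congr (fun m hm => Nf_mconj_Nf (μ.over_pos m hm) (mem_lam_of_over hm))
  rw [this]
  exact Finset.image_id

lemma op_ext {μ ν : Overpartition} (h1 : μ.parts = ν.parts) (h2 : μ.overlined = ν.overlined) : μ = ν := by
  cases μ; cases ν; dsimp at h1 h2; subst h1; subst h2; rfl

lemma oconj_oconj (μ : Overpartition) : oconj (oconj μ) = μ := by
  refine op_ext ?_ (oT_oconj μ)
  show mconj (lam (oconj μ)) - (oT (oconj μ)).val = μ.parts
  rw [lam_oconj, mconj_mconj (lam_pos μ), oT_oconj, lam]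
  exact add_tsub_cancel_right _ _

end L1RC

namespace L1RC

lemma lowerOne_iff (μ : Overpartition) :
    IsLowerKRun 1 μ ↔ ∀ m ∈ μ.overlined, (m - 1) ∉ μ.parts ∧ (m - 1) ∉ μ.overlined := by
  constructor
  · intro h m hm
    obtain ⟨j, hj1, hj2, _, hp, ho, _⟩ := h m hm
    have hje : j = m - 1 := by omega
    subst hje
    exact ⟨hp, ho⟩
  · intro H m hm
    have hm1 : 1 ≤ m := μ.over_pos m hm
    refine ⟨m - 1, by omega, by omega, ?_, (H m hm).1, (H m hm).2, ?_⟩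
    · intro i h1 h2
      have : i = m := by omega
      subst this; exact hm
    · have he : m - 1 + 1 + 1 = m + 1 := by omega
      rw [he]
      intro hcon
      have := (H (m + 1) hcon).2
      simp only [Nat.add_sub_cancel] at this
      exact this hm

lemma not_mem_lam_iff {μ : Overpartition} {a : ℕ} :
    a ∉ lam μ ↔ a ∉ μ.parts ∧ a ∉ μ.overlined := by
  rw [lam, Multiset.mem_add, Finset.mem_val]
  tauto

lemma Nf_eq_of_not_mem {l : Multiset ℕ} {a : ℕ} (h : a ∉ l) : Nf l a = Nf l (a + 1) := by
  have := Nf_succ l a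
  rw [Multiset.count_eq_zero_of_notMem h] at this
  omega

lemma mem_parts_oconj_iff {μ : Overpartition} {t : ℕ} :
    t ∈ (oconj μ).parts ↔ (oT μ).val.count t < (mconj (lam μ)).count t := by
  show t ∈ mconj (lam μ) - (oT μ).val ↔ _
  rw [← Multiset.count_pos, Multiset.count_sub]
  omega

lemma conjClass_oconj_iff (μ : Overpartition) :
    ConjClass (oconj μ) ↔ ∀ m ∈ μ.overlined, (m - 1) ∉ μ.parts ∧ (m - 1) ∉ μ.overlined := by
  constructor
  · intro H m hm
    rw [← not_mem_lam_iff]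
    intro hmem
    have hm1 : 1 ≤ m := μ.over_pos m hm
    have hm2 : 2 ≤ m := by
      have := lam_pos μ _ hmem; omega
    have he : m - 1 + 1 = m := by omega
    have htT : Nf (lam μ) m ∈ (oconj μ).overlined := Finset.mem_image_of_mem _ hm
    have hmlam : m ∈ lam μ := mem_lam_of_over hm
    have hgt : Nf (lam μ) m < Nf (lam μ) (m - 1) := by
      have := Nf_lt_of_mem hmem
      rwa [he] at this
    have hkey : ∀ j ∈ Finset.Icc 1 (lam μ).sum, Nf (lam μ) j = Nf (lam μ) m → j = m := by
      intro j hj hNj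
      by_contra hne
      rcases lt_or_gt_of_ne hne with h | h
      · have h1 : Nf (lam μ) (m - 1) ≤ Nf (lam μ) j := Nf_anti _ (by omega)
        omega
      · have h1 : Nf (lam μ) j ≤ Nf (lam μ) (m + 1) := Nf_anti _ (by omega)
        have h2 := Nf_lt_of_mem hmlam
        omega
    rcases H _ htT with hQ | ⟨hb1, hb2⟩
    · rw [mem_parts_oconj_iff] at hQ
      rw [count_mconj _ (Nf_pos_of_mem hmlam)] at hQ
      have hcT : (oT μ).val.count (Nf (lam μ) m) = 1 :=
        Multiset.count_eq_one_of_mem (oT μ).nodup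
          (Finset.mem_val.mpr (Finset.mem_image_of_mem _ hm))
      rw [hcT] at hQ
      obtain ⟨a, ha, b, hb, hab⟩ := Finset.one_lt_card.mp hQ
      rw [Finset.mem_filter] at ha hb
      have ha' := hkey a ha.1 ha.2.symm
      have hb' := hkey b hb.1 hb.2.symm
      omega
    · have hp0 : Nf (lam μ) (m - 1) ∈ mconj (lam μ) :=
        mem_mconj (Finset.mem_Icc.mpr ⟨by omega, le_trans (by omega) (mem_le_sum hmlam)⟩)
          (Nf_pos_of_mem hmem)
      by_cases hT : Nf (lam μ) (m - 1) ∈ (oconj μ).overlined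
      · have := hb2 _ hT; omega
      · have : Nf (lam μ) (m - 1) ∈ (oconj μ).parts := by
          rw [mem_parts_oconj_iff]
          have h0 : (oT μ).val.count (Nf (lam μ) (m - 1)) = 0 :=
            Multiset.count_eq_zero_of_notMem (fun hc => hT (Finset.mem_val.mp hc))
          have h1 : 0 < (mconj (lam μ)).count (Nf (lam μ) (m - 1)) :=
            Multiset.count_pos.mpr hp0
          omega
        have := hb1 _ this; omega
  · intro H t htT
    obtain ⟨m, hm, rfl⟩ := Finset.mem_image.mp htT
    have hm1 : 1 ≤ m := μ.over_pos m hm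
    have hmlam : m ∈ lam μ := mem_lam_of_over hm
    by_cases hc : ∀ a ∈ lam μ, m ≤ a
    · right
      have hcard : Nf (lam μ) m = Multiset.card (lam μ) := by
        rw [Nf, Multiset.filter_eq_self.mpr hc]
      have hbound : ∀ p ∈ mconj (lam μ), p ≤ Nf (lam μ) m := by
        intro p hp
        rw [mconj, Multiset.mem_filter, Multiset.mem_map] at hp
        obtain ⟨⟨j, hj, rfl⟩, hppos⟩ := hp
        have : Nf (lam μ) j ≤ Multiset.card (lam μ) :=
          Multiset.card_le_card (Multiset.filter_le _ _)
        omega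
      constructor
      · intro p hp
        exact hbound p (Multiset.mem_of_le tsub_le_self hp)
      · intro p hp
        exact hbound p (Multiset.subset_of_le (oT_val_le μ) (Finset.mem_val.mpr hp))
    · left
      push_neg at hc
      obtain ⟨a, ha, ham⟩ := hc
      have hm2 : 2 ≤ m := by
        have := lam_pos μ _ ha; omega
      have he : m - 1 + 1 = m := by omega
      have hnotmem : m - 1 ∉ lam μ := not_mem_lam_iff.mpr (H m hm)
      have heq : Nf (lam μ) (m - 1) = Nf (lam μ) m := by
        have := Nf_eq_of_not_mem hnotmem
        rwa [he] at this
      rw [mem_parts_oconj_iff, count_mconj _ (Nf_pos_of_mem hmlam)]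
      have hcT : (oT μ).val.count (Nf (lam μ) m) ≤ 1 :=
        Multiset.nodup_iff_count_le_one.mp (oT μ).nodup _
      have h2 : 1 < ((Finset.Icc 1 (lam μ).sum).filter
          (fun j => Nf (lam μ) m = Nf (lam μ) j)).card := by
        refine Finset.one_lt_card.mpr ⟨m - 1, ?_, m, ?_, by omega⟩
        · rw [Finset.mem_filter, Finset.mem_Icc]
          exact ⟨⟨by omega, le_trans (by omega) (mem_le_sum hmlam)⟩, heq.symm⟩
        · rw [Finset.mem_filter, Finset.mem_Icc]
          exact ⟨⟨by omega, mem_le_sum hmlam⟩, rfl⟩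
      omega

end L1RC


/-- Lower 1-run overpartitions of n are in bijection with overpartitions of n in which every
overlined part size other than the largest part also occurs non-overlined; in particular the
two classes are equinumerous. -/
theorem lower_one_run_conj (n : ℕ) :
    Nonempty ({μ : Overpartition // μ.size = n ∧ IsLowerKRun 1 μ} ≃
      {μ : Overpartition // μ.size = n ∧ ConjClass μ}) ∧
    Nat.card {μ : Overpartition // μ.size = n ∧ IsLowerKRun 1 μ} =
      Nat.card {μ : Overpartition // μ.size = n ∧ ConjClass μ} := by
  have key : ∀ μ : Overpartition, IsLowerKRun 1 μ ↔ ConjClass (L1RC.oconj μ) :=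
    fun μ => (L1RC.lowerOne_iff μ).trans (L1RC.conjClass_oconj_iff μ).symm
  have e : {μ : Overpartition // μ.size = n ∧ IsLowerKRun 1 μ} ≃
      {μ : Overpartition // μ.size = n ∧ ConjClass μ} :=
    { toFun := fun x => ⟨L1RC.oconj x.1, by
        rw [L1RC.size_oconj]
        exact ⟨x.2.1, (key x.1).mp x.2.2⟩⟩
      invFun := fun y => ⟨L1RC.oconj y.1, by
        refine ⟨by rw [L1RC.size_oconj]; exact y.2.1, ?_⟩
        rw [key (L1RC.oconj y.1), L1RC.oconj_oconj]
        exact y.2.2⟩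
      left_inv := fun x => Subtype.ext (L1RC.oconj_oconj x.1)
      right_inv := fun y => Subtype.ext (L1RC.oconj_oconj y.1) }
  exact ⟨⟨e⟩, Nat.card_congr e⟩
end
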